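/- Let m ≥ 1 and let X₁,…,X_m be independent random variables on a probability space, each taking values in {0,1}. Set N := X₁ + ⋯ + X_m and μ := E[N]. If μ > 0, then E[N·log N] ≤ μ·log μ + 1, where 0·log 0 := 0; equivalently, E[N·log(N/μ)] ≤ 1. -/

import Mathlib

open MeasureTheory

open scoped BigOperators

section Aux

variable {Ω : Type*} [MeasurableSpace Ω] {μ : Measure Ω} [IsProbabilityMeasure μ]

/-- Tangent-line bound for `log (1+x)` at `a`. -/
lemma log_one_add_le_tangent {x a : ℝ} (hx : 0 ≤ x) (ha : 0 ≤ a) :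
    Real.log (1 + x) ≤ Real.log (1 + a) + (x - a) / (1 + a) := by
  have h1a : (0:ℝ) < 1 + a := by linarith
  have h1x : (0:ℝ) < 1 + x := by linarith
  have h := Real.log_le_sub_one_of_pos (x := (1 + x) / (1 + a)) (by positivity)
  have hlog : Real.log ((1 + x) / (1 + a)) = Real.log (1 + x) - Real.log (1 + a) :=
    Real.log_div (by positivity) (by positivity)
  rw [hlog] at h
  have : (1 + x) / (1 + a) - 1 = (x - a) / (1 + a) := by
    field_simp
    ring
  linarith [h, this ▸ h]

end Aux

/-- If `X₁,…,X_m` are independent `{0,1}`-valued random variables, `N := ∑ Xₖ` and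
`μ̄ := E[N] > 0`, then `E[N log N] ≤ μ̄ log μ̄ + 1`. -/
theorem statement19 {Ω : Type*} [MeasurableSpace Ω] (μ : Measure Ω) [IsProbabilityMeasure μ]
    (m : ℕ) (hm : 1 ≤ m) (X : Fin m → Ω → ℝ)
    (hmeas : ∀ k, Measurable (X k))
    (h01 : ∀ k ω, X k ω = 0 ∨ X k ω = 1)
    (hindep : ProbabilityTheory.iIndepFun (m := fun _ => Real.measurableSpace) X μ)
    (hpos : 0 < ∫ ω, (∑ k, X k ω) ∂μ) :
    ∫ ω, (∑ k, X k ω) * Real.log (∑ k, X k ω) ∂μ ≤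
      (∫ ω, (∑ k, X k ω) ∂μ) * Real.log (∫ ω, (∑ k, X k ω) ∂μ) + 1 := by
  classical
  -- Basic facts about the Xₖ
  have hXnn : ∀ k ω, 0 ≤ X k ω := by
    intro k ω; rcases h01 k ω with h | h <;> rw [h] <;> norm_num
  have hXle1 : ∀ k ω, X k ω ≤ 1 := by
    intro k ω; rcases h01 k ω with h | h <;> rw [h] <;> norm_num
  have hXint : ∀ k, Integrable (X k) μ := by
    intro k
    refine Integrable.mono' (integrable_const (1:ℝ)) (hmeas k).aestronglyMeasurable ?_
    filter_upwards with ω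
    rw [Real.norm_eq_abs, abs_of_nonneg (hXnn k ω)]; exact hXle1 k ω
  -- Nk k = sum over the other indices
  set Nk : Fin m → Ω → ℝ := fun k ω => ∑ j ∈ Finset.univ.erase k, X j ω with hNk_def
  have hNkmeas : ∀ k, Measurable (Nk k) := fun k =>
    Finset.measurable_sum _ (fun j _ => hmeas j)
  have hNknn : ∀ k ω, 0 ≤ Nk k ω := fun k ω =>
    Finset.sum_nonneg fun j _ => hXnn j ω
  have hNkint : ∀ k, Integrable (Nk k) μ := fun k =>
    integrable_finset_sum _ (fun j _ => hXint j)
  -- log(1 + Nk) facts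
  set L : Fin m → Ω → ℝ := fun k ω => Real.log (1 + Nk k ω) with hL_def
  have hLmeas : ∀ k, Measurable (L k) := fun k =>
    Real.measurable_log.comp (measurable_const.add (hNkmeas k))
  have hLnn : ∀ k ω, 0 ≤ L k ω := fun k ω =>
    Real.log_nonneg (by linarith [hNknn k ω])
  have hLle : ∀ k ω, L k ω ≤ Nk k ω := by
    intro k ω
    have := Real.log_le_sub_one_of_pos (x := 1 + Nk k ω) (by linarith [hNknn k ω])
    linarith
  have hLint : ∀ k, Integrable (L k) μ := by
    intro k
    refine Integrable.mono' (hNkint k) (hLmeas k).aestronglyMeasurable ?_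
    filter_upwards with ω
    rw [Real.norm_eq_abs, abs_of_nonneg (hLnn k ω)]; exact hLle k ω
  -- Independence: X k is independent of L k
  have hIndepKL : ∀ k, ProbabilityTheory.IndepFun (X k) (L k) μ := by
    intro k
    have h1 : ProbabilityTheory.IndepFun (∑ j ∈ Finset.univ.erase k, X j) (X k) μ :=
      hindep.indepFun_finsetSum_of_notMem hmeas (Finset.notMem_erase k _)
    have h2 : ProbabilityTheory.IndepFun (X k) (Nk k) μ := by
      have := h1.symm
      have heq : (∑ j ∈ Finset.univ.erase k, X j) = Nk k := by
        funext ω; simp [hNk_def, Finset.sum_apply]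
      rwa [heq] at this
    have hmlog : Measurable (fun x : ℝ => Real.log (1 + x)) :=
      Real.measurable_log.comp (measurable_const.add measurable_id)
    exact h2.comp measurable_id hmlog
  -- Pointwise: N log N = ∑ k, X k * L k
  have hNsplit : ∀ k ω, (∑ j, X j ω) = X k ω + Nk k ω := by
    intro k ω
    rw [hNk_def]
    exact (Finset.add_sum_erase Finset.univ (fun j => X j ω) (Finset.mem_univ k)).symm
  have hpt : ∀ ω, (∑ k, X k ω) * Real.log (∑ k, X k ω) = ∑ k, X k ω * L k ω := by
    intro ω
    rw [Finset.sum_mul]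
    refine Finset.sum_congr rfl fun k _ => ?_
    rcases h01 k ω with h | h
    · rw [h, zero_mul, zero_mul]
    · rw [hL_def]
      congr 1
      rw [hNsplit k ω, h]
  -- Integrability of X k * L k
  have hXLint : ∀ k, Integrable (fun ω => X k ω * L k ω) μ := by
    intro k
    refine Integrable.mono' (hNkint k) ((hmeas k).mul (hLmeas k)).aestronglyMeasurable ?_
    filter_upwards with ω
    rw [Real.norm_eq_abs, abs_of_nonneg (mul_nonneg (hXnn k ω) (hLnn k ω))]
    calc X k ω * L k ω ≤ 1 * L k ω := by
          exact mul_le_mul_of_nonneg_right (hXle1 k ω) (hLnn k ω)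
      _ = L k ω := one_mul _
      _ ≤ Nk k ω := hLle k ω
  -- μ̄ and a k
  set a : Fin m → ℝ := fun k => ∫ ω, X k ω ∂μ with ha_def
  have hann : ∀ k, 0 ≤ a k := fun k => integral_nonneg (fun ω => hXnn k ω)
  set M : ℝ := ∫ ω, (∑ k, X k ω) ∂μ with hM_def
  have hMsum : M = ∑ k, a k := by
    rw [hM_def]
    exact integral_finset_sum _ (fun k _ => hXint k)
  have hMpos : 0 < M := hpos
  -- E[Nk k] ≤ M
  have hbk : ∀ k, ∫ ω, Nk k ω ∂μ ≤ M := by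
    intro k
    have : ∫ ω, Nk k ω ∂μ = ∑ j ∈ Finset.univ.erase k, a j := by
      rw [hNk_def]; exact integral_finset_sum _ (fun j _ => hXint j)
    rw [this, hMsum]
    exact Finset.sum_le_sum_of_subset_of_nonneg (Finset.erase_subset _ _)
      (fun j _ _ => hann j)
  -- E[L k] ≤ log (1 + M)
  have hEL : ∀ k, ∫ ω, L k ω ∂μ ≤ Real.log (1 + M) := by
    intro k
    set b : ℝ := ∫ ω, Nk k ω ∂μ with hb_def
    have hbnn : 0 ≤ b := integral_nonneg (fun ω => hNknn k ω)
    have h1b : (0:ℝ) < 1 + b := by linarith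
    have step1 : ∫ ω, L k ω ∂μ ≤ ∫ ω, (Real.log (1 + b) + (Nk k ω - b) / (1 + b)) ∂μ := by
      refine integral_mono (hLint k) ?_ ?_
      · exact (integrable_const _).add (((hNkint k).sub (integrable_const b)).div_const (1 + b))
      · intro ω
        exact log_one_add_le_tangent (hNknn k ω) hbnn
    have hint2 : Integrable (fun ω => (Nk k ω - b) / (1 + b)) μ :=
      ((hNkint k).sub (integrable_const b)).div_const (1 + b)
    have step2 : ∫ ω, (Real.log (1 + b) + (Nk k ω - b) / (1 + b)) ∂μ = Real.log (1 + b) := by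
      have e1 := integral_add (μ := μ) (f := fun _ => Real.log (1 + b))
        (g := fun ω => (Nk k ω - b) / (1 + b)) (integrable_const _) hint2
      have e2 : ∫ ω, (Nk k ω - b) / (1 + b) ∂μ = 0 := by
        rw [integral_div, integral_sub (hNkint k) (integrable_const b)]
        simp [← hb_def]
      rw [e1, e2, integral_const]
      simp
    have step3 : Real.log (1 + b) ≤ Real.log (1 + M) := by
      apply Real.log_le_log h1b
      linarith [hbk k]
    linarith [step1, step2 ▸ step1]
  -- Main computation
  have key : ∫ ω, (∑ k, X k ω) * Real.log (∑ k, X k ω) ∂μ = ∑ k, a k * ∫ ω, L k ω ∂μ := by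
    have h1 : ∫ ω, (∑ k, X k ω) * Real.log (∑ k, X k ω) ∂μ
        = ∫ ω, ∑ k, X k ω * L k ω ∂μ := by
      congr 1; funext ω; exact hpt ω
    rw [h1, integral_finset_sum _ (fun k _ => hXLint k)]
    refine Finset.sum_congr rfl fun k _ => ?_
    have := (hIndepKL k).integral_mul_eq_mul_integral (hmeas k).aestronglyMeasurable
      (hLmeas k).aestronglyMeasurable
    simpa [Pi.mul_apply] using this
  rw [key]
  have step : ∑ k, a k * ∫ ω, L k ω ∂μ ≤ ∑ k, a k * Real.log (1 + M) := by
    refine Finset.sum_le_sum fun k _ => ?_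
    exact mul_le_mul_of_nonneg_left (hEL k) (hann k)
  have step2 : ∑ k, a k * Real.log (1 + M) = M * Real.log (1 + M) := by
    rw [← Finset.sum_mul, ← hMsum]
  -- Final: M log(1+M) ≤ M log M + 1
  have final : M * Real.log (1 + M) ≤ M * Real.log M + 1 := by
    have hlog : Real.log (1 + M) - Real.log M = Real.log ((1 + M) / M) := by
      rw [Real.log_div (by linarith) (ne_of_gt hMpos)]
    have hle : Real.log ((1 + M) / M) ≤ 1 / M := by
      have := Real.log_le_sub_one_of_pos (x := (1 + M) / M) (by positivity)
      have heq : (1 + M) / M - 1 = 1 / M := by field_simp; ring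
      linarith [heq ▸ this]
    have : M * (Real.log (1 + M) - Real.log M) ≤ M * (1 / M) := by
      rw [hlog]
      exact mul_le_mul_of_nonneg_left hle (le_of_lt hMpos)
    have hMinv : M * (1 / M) = 1 := by field_simp
    nlinarith
  calc ∑ k, a k * ∫ ω, L k ω ∂μ ≤ ∑ k, a k * Real.log (1 + M) := step
    _ = M * Real.log (1 + M) := step2
    _ ≤ M * Real.log M + 1 := final
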